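/- Suppose c ≥ 1 is a constant such that |S + A|² ≤ c² · |S| · |A + B₁| · |A + B₂| holds for all finite nonempty sets A, B₁, B₂ and all nonempty S ⊆ B₁ + B₂ in every commutative group. Then the inequality |S + A|² ≤ |S| · |A + B₁| · |A + B₂| holds (with constant 1), by a tensor power (direct power) argument. -/
import Mathlib

open Pointwise

theorem tensor_power_trick (c : ℝ) (hc : 1 ≤ c)
    (H : ∀ (G : Type) (_ : AddCommGroup G) (_ : DecidableEq G)
        (A B₁ B₂ S : Finset G), A.Nonempty → B₁.Nonempty → B₂.Nonempty →
        S.Nonempty → S ⊆ B₁ + B₂ →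
        ((S + A).card : ℝ) ^ 2 ≤ c ^ 2 * S.card * (A + B₁).card * (A + B₂).card) :
    ∀ (G : Type) (_ : AddCommGroup G) (_ : DecidableEq G)
        (A B₁ B₂ S : Finset G), A.Nonempty → B₁.Nonempty → B₂.Nonempty →
        S.Nonempty → S ⊆ B₁ + B₂ →
        ((S + A).card : ℝ) ^ 2 ≤ S.card * (A + B₁).card * (A + B₂).card := by
  intro G _ _ A B₁ B₂ S hA hB₁ hB₂ hS hSB
  -- key: for every k, apply H in (Fin k → G)
  have key : ∀ k : ℕ, (((S + A).card : ℝ) ^ 2) ^ k ≤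
      c ^ 2 * ((S.card : ℝ) * (A + B₁).card * (A + B₂).card) ^ k := by
    intro k
    have h := H (Fin k → G) inferInstance inferInstance
      (Fintype.piFinset fun _ => A) (Fintype.piFinset fun _ => B₁)
      (Fintype.piFinset fun _ => B₂) (Fintype.piFinset fun _ => S)
      (Fintype.piFinset_nonempty.2 fun _ => hA)
      (Fintype.piFinset_nonempty.2 fun _ => hB₁)
      (Fintype.piFinset_nonempty.2 fun _ => hB₂)
      (Fintype.piFinset_nonempty.2 fun _ => hS)
      (by rw [← Fintype.piFinset_add]
          exact Fintype.piFinset_subset _ _ fun _ => hSB)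
    rw [← Fintype.piFinset_add, ← Fintype.piFinset_add, ← Fintype.piFinset_add] at h
    simp only [Fintype.card_piFinset_const] at h
    push_cast at h
    calc (((S + A).card : ℝ) ^ 2) ^ k = (((S + A).card : ℝ) ^ k) ^ 2 := by ring
      _ ≤ c ^ 2 * (S.card : ℝ) ^ k * ((A + B₁).card : ℝ) ^ k * ((A + B₂).card : ℝ) ^ k := h
      _ = c ^ 2 * ((S.card : ℝ) * (A + B₁).card * (A + B₂).card) ^ k := by ring
  set x : ℝ := ((S + A).card : ℝ) ^ 2 with hx
  set y : ℝ := (S.card : ℝ) * (A + B₁).card * (A + B₂).card with hy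
  have hy0 : 0 < y := by
    have h1 : 0 < (S.card : ℝ) := by exact_mod_cast hS.card_pos
    have h2 : 0 < ((A + B₁).card : ℝ) := by exact_mod_cast (hA.add hB₁).card_pos
    have h3 : 0 < ((A + B₂).card : ℝ) := by exact_mod_cast (hA.add hB₂).card_pos
    positivity
  by_contra hlt
  push_neg at hlt
  have hr : 1 < x / y := (one_lt_div hy0).2 hlt
  obtain ⟨n, hn⟩ := pow_unbounded_of_one_lt (c ^ 2) hr
  have := key n
  rw [div_pow, lt_div_iff₀ (by positivity)] at hn
  exact absurd this (not_le.2 hn)
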